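/- Let N ≥ 1. For integers q, a, b with q odd, 1 ≤ b ≤ q ≤ N^{2/3}, gcd(b,q) = 1, and 0 ≤ a ≤ q, define M(q,a,b) = {(x₁,x₂) ∈ [0,N] × [0,N²] : |x₁ − (a/q)N| ≤ 10^{-10} and |x₂ − (b/q)N²| ≤ 10^{-10}}. Then for any two distinct tuples (q,a,b) ≠ (q',a',b'), both satisfying the above conditions, the sets M(q,a,b) and M(q',a',b') are disjoint. -/

import Mathlib

open Set

noncomputable section

/-- The major arc box `M(q,a,b)` in `[0,N] × [0,N²]`. -/
def Mqab (N : ℝ) (q a b : ℤ) : Set (ℝ × ℝ) :=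
  {p | p ∈ Icc ((0 : ℝ), (0 : ℝ)) (N, N ^ 2) ∧
    |p.1 - ((a : ℝ) / (q : ℝ)) * N| ≤ ((10 : ℝ) ^ 10)⁻¹ ∧
    |p.2 - ((b : ℝ) / (q : ℝ)) * N ^ 2| ≤ ((10 : ℝ) ^ 10)⁻¹}

/-- The condition on the tuple `(q,a,b)`: `q` odd, `1 ≤ b ≤ q ≤ N^{2/3}`, `gcd(b,q) = 1`,
`0 ≤ a ≤ q`. -/
def condQAB (N : ℝ) (q a b : ℤ) : Prop :=
  Odd q ∧ 1 ≤ b ∧ b ≤ q ∧ (q : ℝ) ≤ N ^ ((2 : ℝ)/3) ∧ Int.gcd b q = 1 ∧ 0 ≤ a ∧ a ≤ q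

lemma tri_aux (x c d e : ℝ) (h1 : |x - c| ≤ e) (h2 : |x - d| ≤ e) : |c - d| ≤ 2 * e := by
  have : |c - d| ≤ |c - x| + |x - d| := abs_sub_le c x d
  rw [abs_sub_comm c x] at this
  linarith

/-- Distinct major arc boxes are disjoint. -/
theorem statement7 (N : ℝ) (hN : 1 ≤ N) (q a b q' a' b' : ℤ)
    (h : condQAB N q a b) (h' : condQAB N q' a' b')
    (hne : (q, a, b) ≠ (q', a', b')) :
    Disjoint (Mqab N q a b) (Mqab N q' a' b') := by
  obtain ⟨-, hb1, hbq, hqN, hgcd, -, -⟩ := h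
  obtain ⟨-, hb1', hbq', hqN', hgcd', -, -⟩ := h'
  have hq1 : (1:ℤ) ≤ q := hb1.trans hbq
  have hq1' : (1:ℤ) ≤ q' := hb1'.trans hbq'
  have hN0 : (0:ℝ) < N := lt_of_lt_of_le one_pos hN
  have hqR : (1:ℝ) ≤ (q:ℝ) := by exact_mod_cast hq1
  have hqR' : (1:ℝ) ≤ (q':ℝ) := by exact_mod_cast hq1'
  have hqN1 : (q:ℝ) ≤ N := hqN.trans (by
    calc N ^ ((2:ℝ)/3) ≤ N ^ (1:ℝ) :=
          Real.rpow_le_rpow_of_exponent_le hN (by norm_num)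
      _ = N := Real.rpow_one N)
  have hprod : (q:ℝ) * (q':ℝ) ≤ N ^ 2 := by
    calc (q:ℝ) * (q':ℝ) ≤ N ^ ((2:ℝ)/3) * N ^ ((2:ℝ)/3) := by
          apply mul_le_mul hqN hqN' (by linarith) (by positivity)
      _ = N ^ ((4:ℝ)/3) := by rw [← Real.rpow_add hN0]; norm_num
      _ ≤ N ^ (2:ℝ) := Real.rpow_le_rpow_of_exponent_le hN (by norm_num)
      _ = N ^ 2 := by rw [← Real.rpow_natCast N 2]; norm_num
  rw [Set.disjoint_left]
  rintro ⟨x, y⟩ ⟨-, hx1, hy1⟩ ⟨-, hx2, hy2⟩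
  by_cases hbqeq : b = b' ∧ q = q'
  · obtain ⟨rfl, rfl⟩ := hbqeq
    have hane : a ≠ a' := by
      rintro rfl; exact hne rfl
    have h1 : (1:ℝ) ≤ |(a:ℝ) - a'| := by
      have : (1:ℤ) ≤ |a - a'| := Int.one_le_abs (sub_ne_zero.mpr hane)
      calc (1:ℝ) ≤ ((|a - a'| : ℤ) : ℝ) := by exact_mod_cast this
        _ = |(a:ℝ) - a'| := by push_cast [Int.cast_abs]; ring_nf
    have htri := tri_aux x ((a:ℝ)/q * N) ((a':ℝ)/q * N) _ hx1 hx2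
    have hkey : |(a:ℝ)/q * N - (a':ℝ)/q * N| = |(a:ℝ) - a'| / q * N := by
      rw [← sub_mul, ← sub_div, abs_mul, abs_div,
        abs_of_pos (by linarith : (0:ℝ) < (q:ℝ)), abs_of_pos hN0]
    have : (1:ℝ) ≤ |(a:ℝ)/q * N - (a':ℝ)/q * N| := by
      rw [hkey]
      rw [div_mul_eq_mul_div, le_div_iff₀ (by linarith : (0:ℝ) < (q:ℝ)), one_mul]
      nlinarith
    norm_num at htri
    linarith
  · have hbne : b * q' ≠ b' * q := by
      intro heq
      have hd1 : q ∣ q' := by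
        have hcop : IsCoprime (q:ℤ) b := (Int.isCoprime_iff_gcd_eq_one.mpr hgcd).symm
        exact hcop.dvd_of_dvd_mul_left ⟨b', by linarith [heq]⟩
      have hd2 : q' ∣ q := by
        have hcop : IsCoprime (q':ℤ) b' := (Int.isCoprime_iff_gcd_eq_one.mpr hgcd').symm
        exact hcop.dvd_of_dvd_mul_left ⟨b, by linarith [heq]⟩
      have hqq : q = q' := le_antisymm (Int.le_of_dvd (by omega) hd1)
        (Int.le_of_dvd (by omega) hd2)
      have hbb : b = b' := by
        subst hqq
        have : b * q = b' * q := by linarith [heq]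
        exact mul_right_cancel₀ (by omega) this
      exact hbqeq ⟨hbb, hqq⟩
    have h1 : (1:ℝ) ≤ |(b:ℝ) * q' - b' * q| := by
      have : (1:ℤ) ≤ |b * q' - b' * q| := Int.one_le_abs (sub_ne_zero.mpr hbne)
      calc (1:ℝ) ≤ ((|b * q' - b' * q| : ℤ) : ℝ) := by exact_mod_cast this
        _ = |(b:ℝ) * q' - b' * q| := by push_cast [Int.cast_abs]; ring_nf
    have htri := tri_aux y ((b:ℝ)/q * N^2) ((b':ℝ)/q' * N^2) _ hy1 hy2
    have hqpos : (0:ℝ) < (q:ℝ) := by linarith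
    have hqpos' : (0:ℝ) < (q':ℝ) := by linarith
    have hkey : |(b:ℝ)/q * N^2 - (b':ℝ)/q' * N^2|
        = |(b:ℝ) * q' - b' * q| / (q * q') * N^2 := by
      rw [show (b:ℝ)/q * N^2 - (b':ℝ)/q' * N^2
          = ((b:ℝ) * q' - b' * q) / (q * q') * N^2 by field_simp,
        abs_mul, abs_div, abs_of_pos (mul_pos hqpos hqpos'),
        abs_of_pos (by positivity : (0:ℝ) < N^2)]
    have hge : (1:ℝ) ≤ |(b:ℝ)/q * N^2 - (b':ℝ)/q' * N^2| := by
      rw [hkey]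
      have hqq : (0:ℝ) < (q:ℝ) * q' := mul_pos hqpos hqpos'
      rw [div_mul_eq_mul_div, le_div_iff₀ hqq, one_mul]
      calc (q:ℝ) * q' ≤ N^2 := hprod
        _ = 1 * N^2 := by ring
        _ ≤ |(b:ℝ) * q' - b' * q| * N^2 := by
            apply mul_le_mul_of_nonneg_right h1 (by positivity)
    norm_num at htri
    linarith

end
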